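/- Consider a finite-horizon linear MDP: finite state set S, finite action set A, horizon H, feature map φ: S × A → ℝ^d with ‖φ(x,a)‖ ≤ 1, signed measures μ_h = (μ_h^{(1)},…,μ_h^{(d)}) on S with ‖μ_h(S)‖ ≤ √d, vectors θ_h ∈ ℝ^d with ‖θ_h‖ ≤ √d, and transition kernels P_h(·|x,a) = ⟨φ(x,a), μ_h(·)⟩, rewards r_h(x,a) = ⟨φ(x,a), θ_h⟩ ∈ [0,1]. For any policy π: S × [H] → A, there exist weights w_h^π ∈ ℝ^d such that Q_h^π(x,a) = ⟨φ(x,a), w_h^π⟩ for all (x,a,h), where Q_h^π is the action-value function of π. -/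
import Mathlib


open Matrix Finset

/-- In a linear MDP (finite states/actions, transitions and rewards linear in the
feature map), the action-value function of any policy is linear in the features. -/
theorem stmt_9 (S A : Type) [Fintype S] [Fintype A] (d H : ℕ)
    (φ : S → A → Fin d → ℝ)
    (hφ : ∀ x a, Real.sqrt (φ x a ⬝ᵥ φ x a) ≤ 1)
    (μ : ℕ → S → Fin d → ℝ)
    (hμ : ∀ h, Real.sqrt ((fun i => ∑ x' : S, μ h x' i) ⬝ᵥ
      (fun i => ∑ x' : S, μ h x' i)) ≤ Real.sqrt d)
    (θ : ℕ → Fin d → ℝ)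
    (hθ : ∀ h, Real.sqrt (θ h ⬝ᵥ θ h) ≤ Real.sqrt d)
    (P : ℕ → S → A → S → ℝ) (r : ℕ → S → A → ℝ)
    (hP : ∀ h x a x', P h x a x' = φ x a ⬝ᵥ μ h x')
    (hr : ∀ h x a, r h x a = φ x a ⬝ᵥ θ h)
    (hr01 : ∀ h x a, r h x a ∈ Set.Icc (0 : ℝ) 1)
    (π : S → ℕ → A)
    (Q : ℕ → S → A → ℝ)
    (hQend : ∀ x a, Q (H + 1) x a = 0)
    (hBellman : ∀ h ∈ Finset.Icc 1 H, ∀ x a,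
      Q h x a = r h x a + ∑ x' : S, P h x a x' * Q (h + 1) x' (π x' (h + 1))) :
    ∀ h ∈ Finset.Icc 1 H, ∃ w : Fin d → ℝ, ∀ x a, Q h x a = φ x a ⬝ᵥ w := by
  intro h hh
  refine ⟨fun i => θ h i + ∑ x' : S, Q (h + 1) x' (π x' (h + 1)) * μ h x' i, ?_⟩
  intro x a
  rw [hBellman h hh, hr]
  simp only [hP, dotProduct, Finset.mul_sum, Finset.sum_add_distrib, mul_add,
    Finset.sum_mul]
  rw [Finset.sum_comm]
  congr 1
  apply Finset.sum_congr rfl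
  intro i _
  apply Finset.sum_congr rfl
  intro x' _
  ring
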